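/- Let a < b, and let V_p be a finite-dimensional subspace of C¹([a,b];ℝ) such that every φ ∈ V_p satisfies φ(a) = φ(b). Denote by P_p the L²(a,b)-orthogonal projection onto V_p. Let η̃, ũ : [0,T] → V_p be continuously differentiable curves satisfying, for every t ∈ [0,T]: (i) for all χ ∈ V_p, ∫_a^b η̃_t χ dx + (1/6) ∫_a^b (d/dt P_p[η̃_x]) χ' dx = ∫_a^b P_p[(1+η̃)ũ] χ' dx; and (ii) for all ψ ∈ V_p, ∫_a^b ũ_t ψ dx + (1/6) ∫_a^b (d/dt P_p[ũ_x]) ψ' dx = (1/2) ∫_a^b P_p[ũ²] ψ' dx + ∫_a^b P_p[η̃] ψ' dx. Then the semidiscrete energy E(t) := (1/2) ∫_a^b ( η̃² + (1+η̃) ũ² ) dx is constant on [0,T]. -/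

import Mathlib

open MeasureTheory Filter Set

/-- A finite-dimensional space of functions admits a finite separating set of points. -/
lemma exists_eval_finset_aux :
    ∀ (k : ℕ) (W : Submodule ℝ (ℝ → ℝ)), FiniteDimensional ℝ W → Module.finrank ℝ W ≤ k →
      ∃ s : Finset ℝ, ∀ f ∈ W, (∀ x ∈ s, f x = 0) → f = 0 := by
  intro k
  induction k with
  | zero =>
    intro W hW hr
    refine ⟨∅, fun f hf _ => ?_⟩
    have : W = ⊥ := Submodule.finrank_eq_zero.mp (Nat.le_zero.mp hr)
    simpa [this] using hf
  | succ k ih =>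
    intro W hW hr
    by_cases h : ∀ f ∈ W, f = 0
    · exact ⟨∅, fun f hf _ => h f hf⟩
    · push_neg at h
      obtain ⟨f, hf, hfne⟩ := h
      obtain ⟨x₀, hx₀⟩ : ∃ x, f x ≠ 0 := by
        by_contra hc; push_neg at hc; exact hfne (funext hc)
      set W' : Submodule ℝ (ℝ → ℝ) := W ⊓ LinearMap.ker (LinearMap.proj (R := ℝ) (φ := fun _ : ℝ => ℝ) x₀) with hW'
      haveI : FiniteDimensional ℝ W' := Submodule.finiteDimensional_of_le (inf_le_left)
      have hlt : W' < W := by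
        refine lt_of_le_of_ne inf_le_left ?_
        intro he
        have : f ∈ W' := he ▸ hf
        exact hx₀ this.2
      have hrk : Module.finrank ℝ W' ≤ k := by
        have := Submodule.finrank_lt_finrank_of_lt (K := ℝ) hlt
        omega
      obtain ⟨s, hs⟩ := ih W' inferInstance hrk
      refine ⟨insert x₀ s, fun g hg hgz => ?_⟩
      have hg' : g ∈ W' := ⟨hg, hgz x₀ (Finset.mem_insert_self _ _)⟩
      exact hs g hg' (fun x hx => hgz x (Finset.mem_insert_of_mem hx))

lemma exists_eval_finset (W : Submodule ℝ (ℝ → ℝ)) [FiniteDimensional ℝ W] :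
    ∃ s : Finset ℝ, ∀ f ∈ W, (∀ x ∈ s, f x = 0) → f = 0 :=
  exists_eval_finset_aux (Module.finrank ℝ W) W inferInstance le_rfl

/-- Every linear functional on a finite-dimensional space of functions is a
finite linear combination of point evaluations. -/
lemma functional_repr (W : Submodule ℝ (ℝ → ℝ)) [FiniteDimensional ℝ W] (L : W →ₗ[ℝ] ℝ) :
    ∃ (s : Finset ℝ) (w : ℝ → ℝ), ∀ v : W, L v = ∑ x ∈ s, w x * (v : ℝ → ℝ) x := by
  classical
  obtain ⟨s, hs⟩ := exists_eval_finset W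
  set ev : W →ₗ[ℝ] (s → ℝ) :=
    LinearMap.pi (fun x => (LinearMap.proj (R := ℝ) (φ := fun _ : ℝ => ℝ) (x : ℝ)).comp W.subtype) with hev
  have hker : LinearMap.ker ev = ⊥ := by
    rw [LinearMap.ker_eq_bot']
    intro v hv
    have : (v : ℝ → ℝ) = 0 := by
      refine hs v v.2 (fun x hx => ?_)
      have := congrFun hv ⟨x, hx⟩
      simpa [ev] using this
    exact Subtype.ext this
  obtain ⟨g, hg⟩ := LinearMap.exists_leftInverse_of_injective ev hker
  set Λ : (s → ℝ) →ₗ[ℝ] ℝ := L.comp g with hΛ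
  refine ⟨s, fun x => if h : x ∈ s then Λ (fun j => if (⟨x, h⟩ : s) = j then 1 else 0) else 0,
    fun v => ?_⟩
  have h1 : L v = Λ (ev v) := by
    rw [hΛ, LinearMap.comp_apply]
    have : g (ev v) = v := by
      have := congrArg (fun m => m v) hg
      simpa using this
    rw [this]
  rw [h1]
  have h2 : ev v = ∑ i : s, (ev v) i • fun j => if i = j then (1:ℝ) else 0 := pi_eq_sum_univ _
  rw [h2, map_sum]
  rw [← Finset.sum_attach s
    (fun x => (if h : x ∈ s then Λ (fun j => if (⟨x, h⟩ : s) = j then (1:ℝ) else 0) else 0) * (v : ℝ → ℝ) x)]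
  refine Finset.sum_congr rfl (fun i _ => ?_)
  rw [LinearMap.map_smul, dif_pos i.2]
  have hev' : (ev v) i = (v : ℝ → ℝ) i := rfl
  rw [smul_eq_mul, hev', mul_comm]

/-- Master lemma: differentiating `t ↦ ∫ γ t` for a curve in a finite-dimensional
space of interval-integrable functions, with pointwise derivatives. -/
lemma master_deriv {ι : Type} [Fintype ι] (a b : ℝ) (v : ι → ℝ → ℝ)
    (hv : ∀ i, IntervalIntegrable (v i) volume a b)
    (γ : ℝ → ℝ → ℝ) (d : ℝ → ℝ) (t₀ : ℝ)
    (hmem : ∀ t, γ t ∈ Submodule.span ℝ (Set.range v))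
    (hd : ∀ x, HasDerivAt (fun s => γ s x) (d x) t₀) :
    d ∈ Submodule.span ℝ (Set.range v) ∧
      HasDerivAt (fun t => ∫ x in a..b, γ t x) (∫ x in a..b, d x) t₀ := by
  classical
  set W := Submodule.span ℝ (Set.range v) with hWdef
  haveI : FiniteDimensional ℝ W := FiniteDimensional.span_of_finite ℝ (Set.finite_range v)
  -- all elements of W are interval integrable
  have hWint : ∀ f ∈ W, IntervalIntegrable f volume a b := by
    intro f hf
    induction hf using Submodule.span_induction with
    | mem g hg => obtain ⟨i, rfl⟩ := hg; exact hv i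
    | zero => exact intervalIntegrable_const (c := (0:ℝ))
    | add g h _ _ hg hh => exact hg.add hh
    | smul c g _ hg => simpa [smul_eq_mul] using hg.smul c
  -- d ∈ W by closedness
  have hdW : d ∈ W := by
    have hclosed : IsClosed (W : Set (ℝ → ℝ)) := Submodule.closed_of_finiteDimensional W
    set seq : ℕ → ℝ := fun n => t₀ + 1 / (n + 1) with hseq
    have hseq_t : Tendsto seq atTop (nhds t₀) := by
      have : Tendsto (fun n : ℕ => 1 / ((n : ℝ) + 1)) atTop (nhds 0) :=
        tendsto_one_div_add_atTop_nhds_zero_nat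
      simpa [hseq] using (tendsto_const_nhds.add this)
    have hseq_ne : ∀ n, seq n ≠ t₀ := by
      intro n
      have : (0:ℝ) < 1 / (n + 1) := by positivity
      simp only [hseq]; intro h; nlinarith [h]
    have hseq' : Tendsto seq atTop (nhdsWithin t₀ {t₀}ᶜ) := by
      refine tendsto_nhdsWithin_of_tendsto_nhds_of_eventually_within _ hseq_t ?_
      exact Eventually.of_forall (fun n => hseq_ne n)
    set q : ℕ → (ℝ → ℝ) := fun n => (seq n - t₀)⁻¹ • (γ (seq n) - γ t₀) with hq
    have hqW : ∀ n, q n ∈ W := fun n => W.smul_mem _ (W.sub_mem (hmem _) (hmem t₀))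
    have hqlim : Tendsto q atTop (nhds d) := by
      rw [tendsto_pi_nhds]
      intro x
      have h0 := (hasDerivAt_iff_tendsto_slope.mp (hd x)).comp hseq'
      refine h0.congr (fun n => ?_)
      show slope (fun s => γ s x) t₀ (seq n) = q n x
      simp only [slope_def_field, q, Pi.smul_apply, Pi.sub_apply, smul_eq_mul]
      rw [div_eq_inv_mul]
    exact hclosed.mem_of_tendsto hqlim (Eventually.of_forall hqW)
  refine ⟨hdW, ?_⟩
  -- the integral functional on W
  set L : W →ₗ[ℝ] ℝ :=
    { toFun := fun f => ∫ x in a..b, (f : ℝ → ℝ) x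
      map_add' := by
        intro f g
        exact intervalIntegral.integral_add (hWint f f.2) (hWint g g.2)
      map_smul' := by
        intro c f
        simpa [smul_eq_mul] using intervalIntegral.integral_smul c (fun x => (f : ℝ → ℝ) x) } with hL
  obtain ⟨s, w, hw⟩ := functional_repr W L
  have hfun : (fun t => ∫ x in a..b, γ t x) = fun t => ∑ x ∈ s, w x * γ t x := by
    funext t
    exact hw ⟨γ t, hmem t⟩
  have hint : (∫ x in a..b, d x) = ∑ x ∈ s, w x * d x := hw ⟨d, hdW⟩
  rw [hfun, hint]
  exact HasDerivAt.fun_sum (fun x _ => (hd x).const_mul (w x))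

lemma span_mul_mem {n : ℕ} (e : Fin n → ℝ → ℝ) (S : Submodule ℝ (ℝ → ℝ)) (α : Fin n → ℝ)
    (q : ℝ → ℝ) (hq : ∀ i, (fun x => e i x * q x) ∈ S) :
    (fun x => (∑ i, α i * e i x) * q x) ∈ S := by
  have hfe : (fun x => (∑ i, α i * e i x) * q x) = ∑ i : Fin n, α i • fun x => e i x * q x := by
    funext x
    simp only [Finset.sum_apply, Pi.smul_apply, smul_eq_mul, Finset.sum_mul]
    exact Finset.sum_congr rfl fun i _ => by ring
  rw [hfe]
  exact Submodule.sum_mem _ fun i _ => Submodule.smul_mem _ _ (hq i)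

lemma mul_mem_span2 {n : ℕ} (e : Fin n → ℝ → ℝ) (S : Submodule ℝ (ℝ → ℝ))
    (hS : ∀ i j, (fun x => e i x * e j x) ∈ S) (α β : Fin n → ℝ) :
    (fun x => (∑ i, α i * e i x) * (∑ j, β j * e j x)) ∈ S := by
  refine span_mul_mem e S α _ (fun i => ?_)
  have h : (fun x => e i x * (∑ j, β j * e j x)) = fun x => (∑ j, β j * e j x) * e i x :=
    funext fun x => mul_comm _ _
  rw [h]
  exact span_mul_mem e S β _ (fun j => hS j i)

lemma mul_mem_span3 {n : ℕ} (e : Fin n → ℝ → ℝ) (S : Submodule ℝ (ℝ → ℝ))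
    (hS : ∀ i j k, (fun x => e i x * (e j x * e k x)) ∈ S) (α β γ : Fin n → ℝ) :
    (fun x => (∑ i, α i * e i x) * ((∑ j, β j * e j x) * (∑ k, γ k * e k x))) ∈ S := by
  refine span_mul_mem e S α _ (fun i => ?_)
  have h1 : (fun x => e i x * ((∑ j, β j * e j x) * (∑ k, γ k * e k x)))
      = fun x => (∑ j, β j * e j x) * ((∑ k, γ k * e k x) * e i x) := funext fun x => by ring
  rw [h1]
  refine span_mul_mem e S β _ (fun j => ?_)
  have h2 : (fun x => e j x * ((∑ k, γ k * e k x) * e i x))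
      = fun x => (∑ k, γ k * e k x) * (e j x * e i x) := funext fun x => by ring
  rw [h2]
  exact span_mul_mem e S γ _ (fun k => hS k j i)

/-- Conservation of the semidiscrete energy `E(t) = (1/2) ∫_a^b ( ηh² + (1+ηh) uh² ) dx`
for the modified (conservative) Galerkin semidiscretisation of the nondimensional
BBM-BBM system with periodic boundary conditions. Here `Pp` is the `L²(a,b)`
orthogonal projection onto the finite-dimensional subspace `Vp ⊆ C¹` whose elements
take equal values at the endpoints. -/
theorem energy_conservation_conservative_galerkin_periodic
    (a b T : ℝ) (hab : a < b)
    (Vp : Submodule ℝ (ℝ → ℝ))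
    (hVfin : FiniteDimensional ℝ Vp)
    (hVC1 : ∀ f ∈ Vp, ContDiff ℝ 1 f)
    (hVper : ∀ f ∈ Vp, f a = f b)
    (Pp : (ℝ → ℝ) → (ℝ → ℝ))
    (hPmem : ∀ f : ℝ → ℝ, Pp f ∈ Vp)
    (hPproj : ∀ f : ℝ → ℝ, ∀ χ ∈ Vp,
      (∫ x in a..b, Pp f x * χ x) = ∫ x in a..b, f x * χ x)
    (ηh uh : ℝ → ℝ → ℝ)
    (hηmem : ∀ t : ℝ, ηh t ∈ Vp) (humem : ∀ t : ℝ, uh t ∈ Vp)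
    (hηC1 : ∀ x : ℝ, ContDiff ℝ 1 (fun t => ηh t x))
    (huC1 : ∀ x : ℝ, ContDiff ℝ 1 (fun t => uh t x))
    (hηxC1 : ∀ x : ℝ, ContDiff ℝ 1 (fun t => Pp (fun y => deriv (ηh t) y) x))
    (huxC1 : ∀ x : ℝ, ContDiff ℝ 1 (fun t => Pp (fun y => deriv (uh t) y) x))
    (heq1 : ∀ t ∈ Set.Icc (0 : ℝ) T, ∀ χ ∈ Vp,
      (∫ x in a..b, deriv (fun s => ηh s x) t * χ x)
          + 1 / 6 * ∫ x in a..b,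
              deriv (fun s => Pp (fun y => deriv (ηh s) y) x) t * deriv χ x
        = ∫ x in a..b, Pp (fun y => (1 + ηh t y) * uh t y) x * deriv χ x)
    (heq2 : ∀ t ∈ Set.Icc (0 : ℝ) T, ∀ ψ ∈ Vp,
      (∫ x in a..b, deriv (fun s => uh s x) t * ψ x)
          + 1 / 6 * ∫ x in a..b,
              deriv (fun s => Pp (fun y => deriv (uh s) y) x) t * deriv ψ x
        = 1 / 2 * (∫ x in a..b, Pp (fun y => uh t y ^ 2) x * deriv ψ x)
            + ∫ x in a..b, Pp (ηh t) x * deriv ψ x) :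
    ∀ t₁ ∈ Set.Icc (0 : ℝ) T, ∀ t₂ ∈ Set.Icc (0 : ℝ) T,
      (1 / 2) * (∫ x in a..b, (ηh t₁ x ^ 2 + (1 + ηh t₁ x) * uh t₁ x ^ 2))
        = (1 / 2) * ∫ x in a..b, (ηh t₂ x ^ 2 + (1 + ηh t₂ x) * uh t₂ x ^ 2) := by
  classical
  haveI := hVfin
  -- basic facts about elements of Vp
  have hcont : ∀ f ∈ Vp, Continuous f := fun f hf => (hVC1 f hf).continuous
  have hcder : ∀ f ∈ Vp, Continuous (deriv f) := fun f hf => (hVC1 f hf).continuous_deriv le_rfl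
  have hder : ∀ f ∈ Vp, ∀ x : ℝ, HasDerivAt f (deriv f x) x := fun f hf x =>
    (((hVC1 f hf).differentiable one_ne_zero) x).hasDerivAt
  -- a basis of Vp realized as functions
  set bV := Module.finBasis ℝ Vp with hbV
  set e : Fin (Module.finrank ℝ Vp) → ℝ → ℝ := fun i => (bV i : ℝ → ℝ) with he
  have hemem : ∀ i, e i ∈ Vp := fun i => (bV i).2
  have hspan : Submodule.span ℝ (Set.range e) = Vp := by
    have h1 : Set.range e = Vp.subtype '' Set.range bV := by
      rw [← Set.range_comp]; rfl
    rw [h1, ← Submodule.map_span, bV.span_eq, Submodule.map_subtype_top]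
  have hrep : ∀ f (hf : f ∈ Vp) (x : ℝ), f x = ∑ i, bV.repr ⟨f, hf⟩ i * e i x := by
    intro f hf x
    have h0 := congrArg (fun v : Vp => (v : ℝ → ℝ) x) (bV.sum_repr ⟨f, hf⟩)
    simpa [e, -Module.Basis.sum_repr] using h0.symm
  -- products of elements of Vp lie in suitable spans
  have hprod2 : ∀ (S : Submodule ℝ (ℝ → ℝ)), (∀ i j, (fun x => e i x * e j x) ∈ S) →
      ∀ f g, f ∈ Vp → g ∈ Vp → (fun x => f x * g x) ∈ S := by
    intro S hS f g hf hg
    have h1 : (fun x => f x * g x)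
        = fun x => (∑ i, bV.repr ⟨f, hf⟩ i * e i x) * (∑ j, bV.repr ⟨g, hg⟩ j * e j x) :=
      funext fun x => by rw [← hrep f hf x, ← hrep g hg x]
    rw [h1]
    exact mul_mem_span2 e S hS _ _
  have hprod3 : ∀ (S : Submodule ℝ (ℝ → ℝ)),
      (∀ i j k, (fun x => e i x * (e j x * e k x)) ∈ S) →
      ∀ f g h, f ∈ Vp → g ∈ Vp → h ∈ Vp → (fun x => f x * (g x * h x)) ∈ S := by
    intro S hS f g h hf hg hh
    have h1 : (fun x => f x * (g x * h x))
        = fun x => (∑ i, bV.repr ⟨f, hf⟩ i * e i x) *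
            ((∑ j, bV.repr ⟨g, hg⟩ j * e j x) * (∑ l, bV.repr ⟨h, hh⟩ l * e l x)) :=
      funext fun x => by rw [← hrep f hf x, ← hrep g hg x, ← hrep h hh x]
    rw [h1]
    exact mul_mem_span3 e S hS _ _ _
  -- commutation and integration by parts helpers
  have hcomm : ∀ f g : ℝ → ℝ, (∫ x in a..b, f x * g x) = ∫ x in a..b, g x * f x :=
    fun f g => intervalIntegral.integral_congr (fun x _ => mul_comm _ _)
  have ibp : ∀ f g, f ∈ Vp → g ∈ Vp →
      (∫ x in a..b, f x * deriv g x) = - ∫ x in a..b, deriv f x * g x := by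
    intro f g hf hg
    have h := intervalIntegral.integral_deriv_mul_eq_sub (u := f) (v := g)
      (u' := deriv f) (v' := deriv g)
      (fun x _ => hder f hf x) (fun x _ => hder g hg x)
      ((hcder f hf).intervalIntegrable a b) ((hcder g hg).intervalIntegrable a b)
    rw [hVper f hf, hVper g hg, sub_self] at h
    rw [intervalIntegral.integral_add (f := fun x => deriv f x * g x) (g := fun x => f x * deriv g x)
      (((hcder f hf).mul (hcont g hg)).intervalIntegrable a b)
      (((hcont f hf).mul (hcder g hg)).intervalIntegrable a b)] at h
    linarith
  -- projection swap
  have hPc : ∀ (f χ : ℝ → ℝ), χ ∈ Vp →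
      (∫ x in a..b, χ x * Pp f x) = ∫ x in a..b, χ x * f x := by
    intro f χ hχ
    calc (∫ x in a..b, χ x * Pp f x) = ∫ x in a..b, Pp f x * χ x := hcomm _ _
    _ = ∫ x in a..b, f x * χ x := hPproj f χ hχ
    _ = ∫ x in a..b, χ x * f x := hcomm _ _
  -- splitting integrals
  have split3 : ∀ (f g h k : ℝ → ℝ), Continuous f → Continuous g → Continuous h → Continuous k →
      ∀ c₂ c₃ : ℝ,
      (∫ x in a..b, f x * (g x + c₂ * h x + c₃ * k x))
        = (∫ x in a..b, f x * g x) + c₂ * (∫ x in a..b, f x * h x)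
            + c₃ * (∫ x in a..b, f x * k x) := by
    intro f g h k hf hg hh hk c₂ c₃
    have i1 : IntervalIntegrable (fun x => f x * g x) volume a b :=
      (hf.mul hg).intervalIntegrable a b
    have i2 : IntervalIntegrable (fun x => c₂ * (f x * h x)) volume a b :=
      (continuous_const.mul (hf.mul hh)).intervalIntegrable a b
    have i3 : IntervalIntegrable (fun x => c₃ * (f x * k x)) volume a b :=
      (continuous_const.mul (hf.mul hk)).intervalIntegrable a b
    have h1 : (∫ x in a..b, f x * (g x + c₂ * h x + c₃ * k x))
        = ∫ x in a..b, (f x * g x + (c₂ * (f x * h x) + c₃ * (f x * k x))) :=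
      intervalIntegral.integral_congr (fun x _ => by ring)
    rw [h1, intervalIntegral.integral_add i1 (i2.add i3), intervalIntegral.integral_add i2 i3,
      intervalIntegral.integral_const_mul, intervalIntegral.integral_const_mul]
    ring
  have split2 : ∀ (f g k : ℝ → ℝ), Continuous f → Continuous g → Continuous k →
      ∀ c₃ : ℝ,
      (∫ x in a..b, f x * (g x + c₃ * k x))
        = (∫ x in a..b, f x * g x) + c₃ * (∫ x in a..b, f x * k x) := by
    intro f g k hf hg hk c₃
    have i1 : IntervalIntegrable (fun x => f x * g x) volume a b :=
      (hf.mul hg).intervalIntegrable a b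
    have i3 : IntervalIntegrable (fun x => c₃ * (f x * k x)) volume a b :=
      (continuous_const.mul (hf.mul hk)).intervalIntegrable a b
    have h1 : (∫ x in a..b, f x * (g x + c₃ * k x))
        = ∫ x in a..b, (f x * g x + c₃ * (f x * k x)) :=
      intervalIntegral.integral_congr (fun x _ => by ring)
    rw [h1, intervalIntegral.integral_add i1 i3, intervalIntegral.integral_const_mul]
  -- the key derivative computation
  have key : ∀ t ∈ Set.Icc (0:ℝ) T,
      HasDerivAt (fun τ => ∫ x in a..b, (ηh τ x ^ 2 + (1 + ηh τ x) * uh τ x ^ 2)) 0 t := by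
    intro t ht
    -- time derivatives as functions of x
    set ηt : ℝ → ℝ := fun x => deriv (fun s => ηh s x) t with hηtdef
    set ut : ℝ → ℝ := fun x => deriv (fun s => uh s x) t with hutdef
    set Dη : ℝ → ℝ := fun x => deriv (fun s => Pp (fun y => deriv (ηh s) y) x) t with hDηdef
    set Du : ℝ → ℝ := fun x => deriv (fun s => Pp (fun y => deriv (uh s) y) x) t with hDudef
    have hηt' : ∀ x, HasDerivAt (fun s => ηh s x) (ηt x) t := fun x =>
      (((hηC1 x).differentiable one_ne_zero) t).hasDerivAt
    have hut' : ∀ x, HasDerivAt (fun s => uh s x) (ut x) t := fun x =>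
      (((huC1 x).differentiable one_ne_zero) t).hasDerivAt
    have hDη' : ∀ x, HasDerivAt (fun s => Pp (fun y => deriv (ηh s) y) x) (Dη x) t := fun x =>
      (((hηxC1 x).differentiable one_ne_zero) t).hasDerivAt
    have hDu' : ∀ x, HasDerivAt (fun s => Pp (fun y => deriv (uh s) y) x) (Du x) t := fun x =>
      (((huxC1 x).differentiable one_ne_zero) t).hasDerivAt
    -- memberships via the master lemma
    have hve : ∀ i, IntervalIntegrable (e i) volume a b := fun i =>
      (hcont _ (hemem i)).intervalIntegrable a b
    have hηtVp : ηt ∈ Vp := by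
      have h := (master_deriv a b e hve (fun s => ηh s) ηt t
        (fun s => by rw [hspan]; exact hηmem s) hηt').1
      rwa [hspan] at h
    have hutVp : ut ∈ Vp := by
      have h := (master_deriv a b e hve (fun s => uh s) ut t
        (fun s => by rw [hspan]; exact humem s) hut').1
      rwa [hspan] at h
    have hDηVp : Dη ∈ Vp := by
      have h := (master_deriv a b e hve (fun s => Pp (fun y => deriv (ηh s) y)) Dη t
        (fun s => by rw [hspan]; exact hPmem _) hDη').1
      rwa [hspan] at h
    have hDuVp : Du ∈ Vp := by
      have h := (master_deriv a b e hve (fun s => Pp (fun y => deriv (uh s) y)) Du t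
        (fun s => by rw [hspan]; exact hPmem _) hDu').1
      rwa [hspan] at h
    -- coordinates of the curves
    set c : Fin (Module.finrank ℝ Vp) → ℝ → ℝ := fun i s => bV.repr ⟨ηh s, hηmem s⟩ i with hcdef
    set κ : Fin (Module.finrank ℝ Vp) → ℝ → ℝ := fun i s => bV.repr ⟨uh s, humem s⟩ i with hκdef
    have hcdiff : ∀ i, DifferentiableAt ℝ (c i) t := by
      intro i
      obtain ⟨si, wi, hwi⟩ := functional_repr Vp (Module.Basis.coord bV i)
      have hci : c i = fun s => ∑ x ∈ si, wi x * ηh s x := by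
        funext s
        have h2 := hwi ⟨ηh s, hηmem s⟩
        rw [Module.Basis.coord_apply] at h2
        exact h2
      rw [hci]
      exact DifferentiableAt.fun_sum fun x _ =>
        (((hηC1 x).differentiable one_ne_zero) t).const_mul (wi x)
    have hκdiff : ∀ i, DifferentiableAt ℝ (κ i) t := by
      intro i
      obtain ⟨si, wi, hwi⟩ := functional_repr Vp (Module.Basis.coord bV i)
      have hci : κ i = fun s => ∑ x ∈ si, wi x * uh s x := by
        funext s
        have h2 := hwi ⟨uh s, humem s⟩
        rw [Module.Basis.coord_apply] at h2
        exact h2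
      rw [hci]
      exact DifferentiableAt.fun_sum fun x _ =>
        (((huC1 x).differentiable one_ne_zero) t).const_mul (wi x)
    -- spatial derivative expansions
    have hd_eta : ∀ s x, deriv (ηh s) x = ∑ i, c i s * deriv (e i) x := by
      intro s x
      have hexp : ηh s = fun y => ∑ i, c i s * e i y := funext fun y => hrep (ηh s) (hηmem s) y
      rw [hexp]
      exact (HasDerivAt.fun_sum fun i _ => (hder (e i) (hemem i) x).const_mul (c i s)).deriv
    have hd_u : ∀ s x, deriv (uh s) x = ∑ i, κ i s * deriv (e i) x := by
      intro s x
      have hexp : uh s = fun y => ∑ i, κ i s * e i y := funext fun y => hrep (uh s) (humem s) y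
      rw [hexp]
      exact (HasDerivAt.fun_sum fun i _ => (hder (e i) (hemem i) x).const_mul (κ i s)).deriv
    have hηt_sum : ∀ x, ηt x = ∑ i, deriv (c i) t * e i x := by
      intro x
      have h0 : (fun s => ηh s x) = fun s => ∑ i, c i s * e i x :=
        funext fun s => hrep (ηh s) (hηmem s) x
      show deriv (fun s => ηh s x) t = _
      rw [h0]
      exact (HasDerivAt.fun_sum fun i _ => ((hcdiff i).hasDerivAt).mul_const (e i x)).deriv
    have hut_sum : ∀ x, ut x = ∑ i, deriv (κ i) t * e i x := by
      intro x
      have h0 : (fun s => uh s x) = fun s => ∑ i, κ i s * e i x :=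
        funext fun s => hrep (uh s) (humem s) x
      show deriv (fun s => uh s x) t = _
      rw [h0]
      exact (HasDerivAt.fun_sum fun i _ => ((hκdiff i).hasDerivAt).mul_const (e i x)).deriv
    set wη : ℝ → ℝ := fun x => ∑ i, deriv (c i) t * deriv (e i) x with hwηdef
    set wu : ℝ → ℝ := fun x => ∑ i, deriv (κ i) t * deriv (e i) x with hwudef
    have hwηcont : Continuous wη :=
      continuous_finset_sum _ fun i _ => continuous_const.mul (hcder _ (hemem i))
    have hwucont : Continuous wu :=
      continuous_finset_sum _ fun i _ => continuous_const.mul (hcder _ (hemem i))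
    -- pair-product family
    set v2 : Fin (Module.finrank ℝ Vp) × Fin (Module.finrank ℝ Vp) → ℝ → ℝ :=
      fun p => fun x => e p.1 x * e p.2 x with hv2def
    have hv2int : ∀ p, IntervalIntegrable (v2 p) volume a b := fun p =>
      ((hcont _ (hemem p.1)).mul (hcont _ (hemem p.2))).intervalIntegrable a b
    have hS2 : ∀ i j, (fun x => e i x * e j x) ∈ Submodule.span ℝ (Set.range v2) :=
      fun i j => Submodule.subset_span ⟨(i, j), rfl⟩
    -- the derivative swaps
    have hswapη : (∫ x in a..b, Dη x * ut x) = ∫ x in a..b, wη x * ut x := by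
      have hΦ : HasDerivAt (fun s => ∫ x in a..b, Pp (fun y => deriv (ηh s) y) x * ut x)
          (∫ x in a..b, Dη x * ut x) t :=
        (master_deriv a b v2 hv2int
          (fun s x => Pp (fun y => deriv (ηh s) y) x * ut x) (fun x => Dη x * ut x) t
          (fun s => hprod2 _ hS2 _ _ (hPmem _) hutVp)
          (fun x => (hDη' x).mul_const (ut x))).2
      set vU : Fin (Module.finrank ℝ Vp) → ℝ → ℝ := fun i => fun x => deriv (e i) x * ut x
        with hvUdef
      have hvUint : ∀ i, IntervalIntegrable (vU i) volume a b := fun i =>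
        ((hcder _ (hemem i)).mul (hcont _ hutVp)).intervalIntegrable a b
      have hmemΨ : ∀ s, (fun x => deriv (ηh s) x * ut x) ∈ Submodule.span ℝ (Set.range vU) := by
        intro s
        have hfe : (fun x => deriv (ηh s) x * ut x) = ∑ i, (c i s) • vU i := by
          funext x
          simp only [Finset.sum_apply, Pi.smul_apply, smul_eq_mul, hvUdef]
          rw [hd_eta s x, Finset.sum_mul]
          exact Finset.sum_congr rfl fun i _ => by ring
        rw [hfe]
        exact Submodule.sum_mem _ fun i _ =>
          Submodule.smul_mem _ _ (Submodule.subset_span ⟨i, rfl⟩)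
      have hdΨ : ∀ x, HasDerivAt (fun s => deriv (ηh s) x * ut x) (wη x * ut x) t := by
        intro x
        have h3 : (fun s => deriv (ηh s) x * ut x)
            = fun s => (∑ i, c i s * deriv (e i) x) * ut x :=
          funext fun s => by rw [hd_eta s x]
        rw [h3]
        exact (HasDerivAt.fun_sum fun i _ =>
          ((hcdiff i).hasDerivAt).mul_const (deriv (e i) x)).mul_const (ut x)
      have hΨ : HasDerivAt (fun s => ∫ x in a..b, deriv (ηh s) x * ut x)
          (∫ x in a..b, wη x * ut x) t :=
        (master_deriv a b vU hvUint (fun s x => deriv (ηh s) x * ut x)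
          (fun x => wη x * ut x) t hmemΨ hdΨ).2
      have hfuneq : (fun s => ∫ x in a..b, Pp (fun y => deriv (ηh s) y) x * ut x)
          = fun s => ∫ x in a..b, deriv (ηh s) x * ut x :=
        funext fun s => hPproj (fun y => deriv (ηh s) y) ut hutVp
      rw [hfuneq] at hΦ
      exact hΦ.unique hΨ
    have hswapu : (∫ x in a..b, Du x * ηt x) = ∫ x in a..b, wu x * ηt x := by
      have hΦ : HasDerivAt (fun s => ∫ x in a..b, Pp (fun y => deriv (uh s) y) x * ηt x)
          (∫ x in a..b, Du x * ηt x) t :=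
        (master_deriv a b v2 hv2int
          (fun s x => Pp (fun y => deriv (uh s) y) x * ηt x) (fun x => Du x * ηt x) t
          (fun s => hprod2 _ hS2 _ _ (hPmem _) hηtVp)
          (fun x => (hDu' x).mul_const (ηt x))).2
      set vU : Fin (Module.finrank ℝ Vp) → ℝ → ℝ := fun i => fun x => deriv (e i) x * ηt x
        with hvUdef
      have hvUint : ∀ i, IntervalIntegrable (vU i) volume a b := fun i =>
        ((hcder _ (hemem i)).mul (hcont _ hηtVp)).intervalIntegrable a b
      have hmemΨ : ∀ s, (fun x => deriv (uh s) x * ηt x) ∈ Submodule.span ℝ (Set.range vU) := by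
        intro s
        have hfe : (fun x => deriv (uh s) x * ηt x) = ∑ i, (κ i s) • vU i := by
          funext x
          simp only [Finset.sum_apply, Pi.smul_apply, smul_eq_mul, hvUdef]
          rw [hd_u s x, Finset.sum_mul]
          exact Finset.sum_congr rfl fun i _ => by ring
        rw [hfe]
        exact Submodule.sum_mem _ fun i _ =>
          Submodule.smul_mem _ _ (Submodule.subset_span ⟨i, rfl⟩)
      have hdΨ : ∀ x, HasDerivAt (fun s => deriv (uh s) x * ηt x) (wu x * ηt x) t := by
        intro x
        have h3 : (fun s => deriv (uh s) x * ηt x)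
            = fun s => (∑ i, κ i s * deriv (e i) x) * ηt x :=
          funext fun s => by rw [hd_u s x]
        rw [h3]
        exact (HasDerivAt.fun_sum fun i _ =>
          ((hκdiff i).hasDerivAt).mul_const (deriv (e i) x)).mul_const (ηt x)
      have hΨ : HasDerivAt (fun s => ∫ x in a..b, deriv (uh s) x * ηt x)
          (∫ x in a..b, wu x * ηt x) t :=
        (master_deriv a b vU hvUint (fun s x => deriv (uh s) x * ηt x)
          (fun x => wu x * ηt x) t hmemΨ hdΨ).2
      have hfuneq : (fun s => ∫ x in a..b, Pp (fun y => deriv (uh s) y) x * ηt x)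
          = fun s => ∫ x in a..b, deriv (uh s) x * ηt x :=
        funext fun s => hPproj (fun y => deriv (uh s) y) ηt hηtVp
      rw [hfuneq] at hΦ
      exact hΦ.unique hΨ
    -- the cross terms cancel (periodicity)
    have hM4 : (∫ x in a..b, wη x * ut x) + (∫ x in a..b, ηt x * wu x) = 0 := by
      have hηtfun : ηt = fun x => ∑ i, deriv (c i) t * e i x := funext hηt_sum
      have hutfun : ut = fun x => ∑ i, deriv (κ i) t * e i x := funext hut_sum
      have hd1 : ∀ x ∈ uIcc a b, HasDerivAt ηt (wη x) x := by
        intro x _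
        rw [hηtfun]
        exact HasDerivAt.fun_sum fun i _ => (hder _ (hemem i) x).const_mul _
      have hd2 : ∀ x ∈ uIcc a b, HasDerivAt ut (wu x) x := by
        intro x _
        rw [hutfun]
        exact HasDerivAt.fun_sum fun i _ => (hder _ (hemem i) x).const_mul _
      have h := intervalIntegral.integral_deriv_mul_eq_sub (u := ηt) (v := ut)
        (u' := wη) (v' := wu) hd1 hd2
        (hwηcont.intervalIntegrable a b) (hwucont.intervalIntegrable a b)
      rw [hVper ηt hηtVp, hVper ut hutVp, sub_self] at h
      rw [intervalIntegral.integral_add (f := fun x => wη x * ut x) (g := fun x => ηt x * wu x)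
        ((hwηcont.mul (hcont _ hutVp)).intervalIntegrable a b)
        (((hcont _ hηtVp).mul hwucont).intervalIntegrable a b)] at h
      linarith
    -- energy derivative via the master lemma
    set vE : ((Fin (Module.finrank ℝ Vp) × Fin (Module.finrank ℝ Vp)) ⊕
        (Fin (Module.finrank ℝ Vp) × Fin (Module.finrank ℝ Vp) × Fin (Module.finrank ℝ Vp)))
        → ℝ → ℝ :=
      Sum.elim (fun p => fun x => e p.1 x * e p.2 x)
        (fun p => fun x => e p.1 x * (e p.2.1 x * e p.2.2 x)) with hvEdef
    have hvEint : ∀ i, IntervalIntegrable (vE i) volume a b := by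
      rintro (⟨i, j⟩ | ⟨i, j, k⟩)
      · exact ((hcont _ (hemem i)).mul (hcont _ (hemem j))).intervalIntegrable a b
      · exact ((hcont _ (hemem i)).mul
          ((hcont _ (hemem j)).mul (hcont _ (hemem k)))).intervalIntegrable a b
    have hSE2 : ∀ i j, (fun x => e i x * e j x) ∈ Submodule.span ℝ (Set.range vE) :=
      fun i j => Submodule.subset_span ⟨Sum.inl (i, j), rfl⟩
    have hSE3 : ∀ i j k, (fun x => e i x * (e j x * e k x)) ∈ Submodule.span ℝ (Set.range vE) :=
      fun i j k => Submodule.subset_span ⟨Sum.inr (i, j, k), rfl⟩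
    have hmemE : ∀ τ, (fun x => ηh τ x ^ 2 + (1 + ηh τ x) * uh τ x ^ 2)
        ∈ Submodule.span ℝ (Set.range vE) := by
      intro τ
      have hfe : (fun x => ηh τ x ^ 2 + (1 + ηh τ x) * uh τ x ^ 2)
          = (fun x => ηh τ x * ηh τ x) + ((fun x => uh τ x * uh τ x)
              + fun x => ηh τ x * (uh τ x * uh τ x)) := by
        funext x; simp only [Pi.add_apply]; ring
      rw [hfe]
      exact Submodule.add_mem _ (hprod2 _ hSE2 _ _ (hηmem τ) (hηmem τ))
        (Submodule.add_mem _ (hprod2 _ hSE2 _ _ (humem τ) (humem τ))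
          (hprod3 _ hSE3 _ _ _ (hηmem τ) (humem τ) (humem τ)))
    set dE : ℝ → ℝ := fun x =>
      2 * (ηt x * ηh t x) + ηt x * uh t x ^ 2 + 2 * (ut x * ((1 + ηh t x) * uh t x)) with hdEdef
    have hdEderiv : ∀ x, HasDerivAt (fun τ => ηh τ x ^ 2 + (1 + ηh τ x) * uh τ x ^ 2) (dE x) t := by
      intro x
      have h0 := ((hηt' x).pow 2).add
        (((hasDerivAt_const t (1 : ℝ)).add (hηt' x)).mul ((hut' x).pow 2))
      convert h0 using 1
      show dE x = _
      simp only [dE, Pi.pow_apply, Pi.add_apply]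
      push_cast
      ring
      all_goals rfl
    have hM1 : HasDerivAt (fun τ => ∫ x in a..b, (ηh τ x ^ 2 + (1 + ηh τ x) * uh τ x ^ 2))
        (∫ x in a..b, dE x) t :=
      (master_deriv a b vE hvEint (fun τ x => ηh τ x ^ 2 + (1 + ηh τ x) * uh τ x ^ 2)
        dE t hmemE hdEderiv).2
    -- test functions
    set A : ℝ → ℝ := Pp (ηh t) with hAdef
    set B2 : ℝ → ℝ := Pp (fun y => uh t y ^ 2) with hB2def
    set SS : ℝ → ℝ := Pp (fun y => (1 + ηh t y) * uh t y) with hSSdef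
    have hAVp : A ∈ Vp := hPmem _
    have hB2Vp : B2 ∈ Vp := hPmem _
    have hSSVp : SS ∈ Vp := hPmem _
    set χ : ℝ → ℝ := A + (2⁻¹ : ℝ) • B2 + (-6⁻¹ : ℝ) • Du with hχdef
    set ψ : ℝ → ℝ := SS + (-6⁻¹ : ℝ) • Dη with hψdef
    have hχVp : χ ∈ Vp :=
      Vp.add_mem (Vp.add_mem hAVp (Vp.smul_mem _ hB2Vp)) (Vp.smul_mem _ hDuVp)
    have hψVp : ψ ∈ Vp := Vp.add_mem hSSVp (Vp.smul_mem _ hDηVp)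
    have hχd : ∀ x, deriv χ x = deriv A x + 2⁻¹ * deriv B2 x + -6⁻¹ * deriv Du x := by
      intro x
      have h0 : HasDerivAt χ (deriv A x + 2⁻¹ * deriv B2 x + -6⁻¹ * deriv Du x) x :=
        ((hder A hAVp x).add ((hder B2 hB2Vp x).const_mul _)).add
          ((hder Du hDuVp x).const_mul _)
      exact h0.deriv
    have hψd : ∀ x, deriv ψ x = deriv SS x + -6⁻¹ * deriv Dη x := by
      intro x
      have h0 : HasDerivAt ψ (deriv SS x + -6⁻¹ * deriv Dη x) x :=
        (hder SS hSSVp x).add ((hder Dη hDηVp x).const_mul _)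
      exact h0.deriv
    -- instantiate the weak equations
    have E1 := heq1 t ht χ hχVp
    have E2 := heq2 t ht ψ hψVp
    -- continuity facts
    have contA : Continuous A := hcont _ hAVp
    have contB2 : Continuous B2 := hcont _ hB2Vp
    have contSS : Continuous SS := hcont _ hSSVp
    have contDη : Continuous Dη := hcont _ hDηVp
    have contDu : Continuous Du := hcont _ hDuVp
    have contηt : Continuous ηt := hcont _ hηtVp
    have contut : Continuous ut := hcont _ hutVp
    have contA' : Continuous (deriv A) := hcder _ hAVp
    have contB2' : Continuous (deriv B2) := hcder _ hB2Vp
    have contSS' : Continuous (deriv SS) := hcder _ hSSVp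
    have contDη' : Continuous (deriv Dη) := hcder _ hDηVp
    have contDu' : Continuous (deriv Du) := hcder _ hDuVp
    -- split the equation integrals
    have s1 : (∫ x in a..b, deriv (fun s => ηh s x) t * χ x)
        = (∫ x in a..b, ηt x * A x) + 2⁻¹ * (∫ x in a..b, ηt x * B2 x)
            + -6⁻¹ * (∫ x in a..b, ηt x * Du x) := by
      have h0 : (∫ x in a..b, deriv (fun s => ηh s x) t * χ x)
          = ∫ x in a..b, ηt x * (A x + 2⁻¹ * B2 x + -6⁻¹ * Du x) :=
        intervalIntegral.integral_congr (fun x _ => rfl)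
      rw [h0]
      exact split3 ηt A B2 Du contηt contA contB2 contDu _ _
    have s2 : (∫ x in a..b, deriv (fun s => Pp (fun y => deriv (ηh s) y) x) t * deriv χ x)
        = (∫ x in a..b, Dη x * deriv A x) + 2⁻¹ * (∫ x in a..b, Dη x * deriv B2 x)
            + -6⁻¹ * (∫ x in a..b, Dη x * deriv Du x) := by
      have h0 : (∫ x in a..b, deriv (fun s => Pp (fun y => deriv (ηh s) y) x) t * deriv χ x)
          = ∫ x in a..b, Dη x * (deriv A x + 2⁻¹ * deriv B2 x + -6⁻¹ * deriv Du x) :=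
        intervalIntegral.integral_congr (fun x _ => by rw [hχd x])
      rw [h0]
      exact split3 Dη (deriv A) (deriv B2) (deriv Du) contDη contA' contB2' contDu' _ _
    have s3 : (∫ x in a..b, Pp (fun y => (1 + ηh t y) * uh t y) x * deriv χ x)
        = (∫ x in a..b, SS x * deriv A x) + 2⁻¹ * (∫ x in a..b, SS x * deriv B2 x)
            + -6⁻¹ * (∫ x in a..b, SS x * deriv Du x) := by
      have h0 : (∫ x in a..b, Pp (fun y => (1 + ηh t y) * uh t y) x * deriv χ x)
          = ∫ x in a..b, SS x * (deriv A x + 2⁻¹ * deriv B2 x + -6⁻¹ * deriv Du x) :=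
        intervalIntegral.integral_congr (fun x _ => by rw [hχd x])
      rw [h0]
      exact split3 SS (deriv A) (deriv B2) (deriv Du) contSS contA' contB2' contDu' _ _
    have s4 : (∫ x in a..b, deriv (fun s => uh s x) t * ψ x)
        = (∫ x in a..b, ut x * SS x) + -6⁻¹ * (∫ x in a..b, ut x * Dη x) := by
      have h0 : (∫ x in a..b, deriv (fun s => uh s x) t * ψ x)
          = ∫ x in a..b, ut x * (SS x + -6⁻¹ * Dη x) :=
        intervalIntegral.integral_congr (fun x _ => rfl)
      rw [h0]
      exact split2 ut SS Dη contut contSS contDη _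
    have s5 : (∫ x in a..b, deriv (fun s => Pp (fun y => deriv (uh s) y) x) t * deriv ψ x)
        = (∫ x in a..b, Du x * deriv SS x) + -6⁻¹ * (∫ x in a..b, Du x * deriv Dη x) := by
      have h0 : (∫ x in a..b, deriv (fun s => Pp (fun y => deriv (uh s) y) x) t * deriv ψ x)
          = ∫ x in a..b, Du x * (deriv SS x + -6⁻¹ * deriv Dη x) :=
        intervalIntegral.integral_congr (fun x _ => by rw [hψd x])
      rw [h0]
      exact split2 Du (deriv SS) (deriv Dη) contDu contSS' contDη' _
    have s6 : (∫ x in a..b, Pp (fun y => uh t y ^ 2) x * deriv ψ x)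
        = (∫ x in a..b, B2 x * deriv SS x) + -6⁻¹ * (∫ x in a..b, B2 x * deriv Dη x) := by
      have h0 : (∫ x in a..b, Pp (fun y => uh t y ^ 2) x * deriv ψ x)
          = ∫ x in a..b, B2 x * (deriv SS x + -6⁻¹ * deriv Dη x) :=
        intervalIntegral.integral_congr (fun x _ => by rw [hψd x])
      rw [h0]
      exact split2 B2 (deriv SS) (deriv Dη) contB2 contSS' contDη' _
    have s7 : (∫ x in a..b, Pp (ηh t) x * deriv ψ x)
        = (∫ x in a..b, A x * deriv SS x) + -6⁻¹ * (∫ x in a..b, A x * deriv Dη x) := by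
      have h0 : (∫ x in a..b, Pp (ηh t) x * deriv ψ x)
          = ∫ x in a..b, A x * (deriv SS x + -6⁻¹ * deriv Dη x) :=
        intervalIntegral.integral_congr (fun x _ => by rw [hψd x])
      rw [h0]
      exact split2 A (deriv SS) (deriv Dη) contA contSS' contDη' _
    rw [s1, s2, s3] at E1
    rw [s4, s5, s6, s7] at E2
    -- integration by parts relations
    have I1 : (∫ x in a..b, Dη x * deriv A x) = - ∫ x in a..b, deriv Dη x * A x :=
      ibp Dη A hDηVp hAVp
    have C1 : (∫ x in a..b, deriv Dη x * A x) = ∫ x in a..b, A x * deriv Dη x :=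
      hcomm _ _
    have I2 : (∫ x in a..b, Dη x * deriv B2 x) = - ∫ x in a..b, deriv Dη x * B2 x :=
      ibp Dη B2 hDηVp hB2Vp
    have C2 : (∫ x in a..b, deriv Dη x * B2 x) = ∫ x in a..b, B2 x * deriv Dη x :=
      hcomm _ _
    have I3 : (∫ x in a..b, Dη x * deriv Du x) = - ∫ x in a..b, deriv Dη x * Du x :=
      ibp Dη Du hDηVp hDuVp
    have C3 : (∫ x in a..b, deriv Dη x * Du x) = ∫ x in a..b, Du x * deriv Dη x :=
      hcomm _ _
    have I4 : (∫ x in a..b, SS x * deriv A x) = - ∫ x in a..b, deriv SS x * A x :=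
      ibp SS A hSSVp hAVp
    have C4 : (∫ x in a..b, deriv SS x * A x) = ∫ x in a..b, A x * deriv SS x :=
      hcomm _ _
    have I5 : (∫ x in a..b, SS x * deriv B2 x) = - ∫ x in a..b, deriv SS x * B2 x :=
      ibp SS B2 hSSVp hB2Vp
    have C5 : (∫ x in a..b, deriv SS x * B2 x) = ∫ x in a..b, B2 x * deriv SS x :=
      hcomm _ _
    have I6 : (∫ x in a..b, SS x * deriv Du x) = - ∫ x in a..b, deriv SS x * Du x :=
      ibp SS Du hSSVp hDuVp
    have C6 : (∫ x in a..b, deriv SS x * Du x) = ∫ x in a..b, Du x * deriv SS x :=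
      hcomm _ _
    -- projection identities
    have P1 : (∫ x in a..b, ηt x * A x) = ∫ x in a..b, ηt x * ηh t x :=
      hPc (ηh t) ηt hηtVp
    have P2 : (∫ x in a..b, ηt x * B2 x) = ∫ x in a..b, ηt x * uh t x ^ 2 :=
      hPc (fun y => uh t y ^ 2) ηt hηtVp
    have P3 : (∫ x in a..b, ut x * SS x) = ∫ x in a..b, ut x * ((1 + ηh t x) * uh t x) :=
      hPc (fun y => (1 + ηh t y) * uh t y) ut hutVp
    -- the cross terms
    have Q1 : (∫ x in a..b, ηt x * Du x) = ∫ x in a..b, Du x * ηt x := hcomm _ _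
    have Q2 : (∫ x in a..b, wu x * ηt x) = ∫ x in a..b, ηt x * wu x := hcomm _ _
    have Q3 : (∫ x in a..b, ut x * Dη x) = ∫ x in a..b, Dη x * ut x := hcomm _ _
    -- split the energy derivative
    have hdEsplit : (∫ x in a..b, dE x)
        = 2 * (∫ x in a..b, ηt x * ηh t x) + (∫ x in a..b, ηt x * uh t x ^ 2)
            + 2 * (∫ x in a..b, ut x * ((1 + ηh t x) * uh t x)) := by
      have i1 : IntervalIntegrable (fun x => 2 * (ηt x * ηh t x)) volume a b :=
        (continuous_const.mul (contηt.mul (hcont _ (hηmem t)))).intervalIntegrable a b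
      have i2 : IntervalIntegrable (fun x => ηt x * uh t x ^ 2) volume a b :=
        (contηt.mul ((hcont _ (humem t)).pow 2)).intervalIntegrable a b
      have i3 : IntervalIntegrable (fun x => 2 * (ut x * ((1 + ηh t x) * uh t x))) volume a b :=
        (continuous_const.mul (contut.mul (((continuous_const.add
          (hcont _ (hηmem t))).mul (hcont _ (humem t)))))).intervalIntegrable a b
      have h0 : (∫ x in a..b, dE x) = ∫ x in a..b,
          (2 * (ηt x * ηh t x) + ηt x * uh t x ^ 2 + 2 * (ut x * ((1 + ηh t x) * uh t x))) :=
        intervalIntegral.integral_congr (fun x _ => rfl)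
      rw [h0, intervalIntegral.integral_add (i1.add i2) i3,
        intervalIntegral.integral_add i1 i2,
        intervalIntegral.integral_const_mul, intervalIntegral.integral_const_mul]
    have hfinal : (∫ x in a..b, dE x) = 0 := by
      rw [hdEsplit]
      linarith [E1, E2, I1, C1, I2, C2, I3, C3, I4, C4, I5, C5, I6, C6,
        P1, P2, P3, Q1, Q2, Q3, hswapη, hswapu, hM4]
    rw [hfinal] at hM1
    exact hM1
  -- conclude: the energy is constant on [0, T]
  intro t₁ ht₁ t₂ ht₂
  set F : ℝ → ℝ := fun τ => ∫ x in a..b, (ηh τ x ^ 2 + (1 + ηh τ x) * uh τ x ^ 2) with hF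
  have hcontF : ContinuousOn F (Set.Icc 0 T) :=
    fun τ hτ => ((key τ hτ).continuousAt).continuousWithinAt
  have hderF : ∀ τ ∈ Set.Ico (0:ℝ) T, HasDerivWithinAt F 0 (Set.Ici τ) τ :=
    fun τ hτ => (key τ (Set.Ico_subset_Icc_self hτ)).hasDerivWithinAt
  have hconst := constant_of_has_deriv_right_zero hcontF hderF
  show (1 / 2) * F t₁ = (1 / 2) * F t₂
  rw [hconst t₁ ht₁, hconst t₂ ht₂]
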